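/- Let N ≥ 2 and let A, B, C ∈ ℂ satisfy A ≠ 0, C ≠ 0 and B² − 4AC ≠ 0. Suppose β_0, β_1, …, β_N ∈ ℂ are not all zero, β_0 = β_N = 0, and C β_{j−1} + B β_j + A β_{j+1} = 0 for all j = 1,…,N−1. Then there exists k ∈ {1,…,N−1} such that B² = 4AC·cos²(kπ/N). -/

import Mathlib

/-- Let `N ≥ 2` and `A, B, C ∈ ℂ` with `A ≠ 0`, `C ≠ 0` and `B² - 4AC ≠ 0`.  If
`β_0, …, β_N` are not all zero, `β_0 = β_N = 0` and
`C β_{j-1} + B β_j + A β_{j+1} = 0` for `j = 1, …, N-1`, then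
`B² = 4AC cos²(kπ/N)` for some `k ∈ {1, …, N-1}`. -/
theorem stmt7 (N : ℕ) (hN : 2 ≤ N) (A B C : ℂ) (hA : A ≠ 0) (hC : C ≠ 0)
    (hdisc : B ^ 2 - 4 * A * C ≠ 0) (β : ℕ → ℂ)
    (hne : ∃ j ≤ N, β j ≠ 0) (hb0 : β 0 = 0) (hbN : β N = 0)
    (hrec : ∀ j, 1 ≤ j → j ≤ N - 1 →
      C * β (j - 1) + B * β j + A * β (j + 1) = 0) :
    ∃ k, 1 ≤ k ∧ k ≤ N - 1 ∧
      B ^ 2 = 4 * A * C * ((Real.cos (k * Real.pi / N) : ℝ) : ℂ) ^ 2 := by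
  obtain ⟨D, hD⟩ := IsAlgClosed.exists_pow_nat_eq (B ^ 2 - 4 * A * C) (n := 2) two_pos
  have hD0 : D ≠ 0 := by
    intro h; apply hdisc; rw [← hD, h]; ring
  set r : ℂ := (-B + D) / (2 * A) with hr_def
  set s : ℂ := (-B - D) / (2 * A) with hs_def
  have h2A : (2 : ℂ) * A ≠ 0 := by simp [hA]
  have hr : A * r ^ 2 + B * r + C = 0 := by
    rw [hr_def]; field_simp
    linear_combination hD
  have hs : A * s ^ 2 + B * s + C = 0 := by
    rw [hs_def]; field_simp
    linear_combination hD
  have hsum : A * (r + s) = -B := by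
    rw [hr_def, hs_def]; field_simp; ring
  have hprod : A * (r * s) = C := by
    rw [hr_def, hs_def]; field_simp
    linear_combination (-1 : ℂ) * hD
  have hrs : r - s ≠ 0 := by
    have : r - s = D / A := by rw [hr_def, hs_def]; field_simp; ring
    rw [this]
    exact div_ne_zero hD0 hA
  have hs0 : s ≠ 0 := by
    intro h; apply hC; rw [← hprod, h]; ring
  have hr0 : r ≠ 0 := by
    intro h; apply hC; rw [← hprod, h]; ring
  set a : ℂ := β 1 / (r - s) with ha_def
  have hβ : ∀ j, j ≤ N → β j = a * (r ^ j - s ^ j) := by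
    intro j
    induction j using Nat.strong_induction_on with
    | _ j ih =>
      match j with
      | 0 => intro _; simp [hb0]
      | 1 => intro _; rw [ha_def, pow_one, pow_one, div_mul_cancel₀ _ hrs]
      | (m + 2) =>
        intro hm
        have h1 : β m = a * (r ^ m - s ^ m) := ih m (by omega) (by omega)
        have h2 : β (m + 1) = a * (r ^ (m + 1) - s ^ (m + 1)) :=
          ih (m + 1) (by omega) (by omega)
        have h3 := hrec (m + 1) (by omega) (by omega)
        simp only [Nat.add_sub_cancel] at h3
        have hβ2 : A * β (m + 2) = -(C * β m + B * β (m + 1)) := by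
          linear_combination h3
        have key : A * (a * (r ^ (m + 2) - s ^ (m + 2)))
            = -(C * (a * (r ^ m - s ^ m)) + B * (a * (r ^ (m + 1) - s ^ (m + 1)))) := by
          linear_combination (a * r ^ m) * hr - (a * s ^ m) * hs
        have : A * β (m + 2) = A * (a * (r ^ (m + 2) - s ^ (m + 2))) := by
          rw [hβ2, key, h1, h2]
        exact mul_left_cancel₀ hA this
  have ha0 : a ≠ 0 := by
    obtain ⟨j, hj, hjne⟩ := hne
    intro h
    apply hjne
    rw [hβ j hj, h, zero_mul]
  have hrN : r ^ N = s ^ N := by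
    have := hβ N le_rfl
    rw [hbN] at this
    have h0 := (mul_eq_zero.mp this.symm).resolve_left ha0
    exact sub_eq_zero.mp h0
  have hN0 : N ≠ 0 := by omega
  haveI : NeZero N := ⟨hN0⟩
  set ζ : ℂ := r / s with hζ_def
  have hζN : ζ ^ N = 1 := by
    rw [hζ_def, div_pow, hrN, div_self (pow_ne_zero _ hs0)]
  have hζ1 : ζ ≠ 1 := by
    intro h
    apply hrs
    have : r = s := by
      rw [hζ_def, div_eq_one_iff_eq hs0] at h
      exact h
    rw [this, sub_self]
  obtain ⟨k, hkN, hk⟩ :=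
    (Complex.isPrimitiveRoot_exp N hN0).eq_pow_of_pow_eq_one hζN
  have hk0 : k ≠ 0 := by
    intro h
    apply hζ1
    rw [← hk, h, pow_zero]
  refine ⟨k, by omega, by omega, ?_⟩
  set θ : ℝ := k * Real.pi / N with hθ
  set w : ℂ := Complex.exp (θ * Complex.I) with hw
  have hw0 : w ≠ 0 := Complex.exp_ne_zero _
  have hNR : (N : ℂ) ≠ 0 := Nat.cast_ne_zero.mpr hN0
  have hw2 : w ^ 2 = ζ := by
    rw [← hk, hw, sq, ← Complex.exp_add, ← Complex.exp_nat_mul]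
    congr 1
    rw [hθ]
    push_cast
    field_simp
    ring
  have hcos : ((Real.cos θ : ℝ) : ℂ) = (w + w⁻¹) / 2 := by
    rw [Complex.ofReal_cos]
    show (Complex.exp (↑θ * Complex.I) + Complex.exp (-↑θ * Complex.I)) / 2 = _
    rw [neg_mul, Complex.exp_neg]
  have hB : B = -(A * (r + s)) := by rw [hr_def, hs_def]; field_simp; ring
  have hC2 : C = A * (r * s) := hprod.symm
  have hr_eq : r = w ^ 2 * s := by
    rw [hw2, hζ_def]
    field_simp
  rw [hB, hC2, hcos, hr_eq]
  field_simp
  ring
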